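/- (Lemma L1, part a) Let 𝓛(Y) = Σ_{I⊆{1,…,m}} η_I² F_I Y F_Iᵀ for fixed real n×n matrices F_I. If there exists a positive definite n×n matrix Ȳ with 𝓛(Ȳ) ≺ Ȳ, then for every positive semidefinite n×n matrix W₀ the iterates converge to zero: limₖ→∞ 𝓛ᵏ(W₀) = 0 (entrywise). -/

import Mathlib

open Matrix

/-- The scalar η_I = √(∏_{i∈I} ν̄ᵢ · ∏_{i∉I}(1−ν̄ᵢ)). -/
noncomputable def eta {m : ℕ} (ν : Fin m → ℝ) (I : Finset (Fin m)) : ℝ :=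
  Real.sqrt ((∏ i ∈ I, ν i) * (∏ i ∈ Iᶜ, (1 - ν i)))

/-- The linear operator 𝓛(Y) = Σ_{I⊆{1,…,m}} η_I² F_I Y F_Iᵀ. -/
noncomputable def Lop {m n : ℕ} (ν : Fin m → ℝ)
    (F : Finset (Fin m) → Matrix (Fin n) (Fin n) ℝ)
    (Y : Matrix (Fin n) (Fin n) ℝ) : Matrix (Fin n) (Fin n) ℝ :=
  ∑ I : Finset (Fin m), (eta ν I) ^ 2 • (F I * Y * (F I)ᵀ)


section aux
variable {n : ℕ}

lemma psd_smul {c : ℝ} (hc : 0 ≤ c) {M : Matrix (Fin n) (Fin n) ℝ}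
    (hM : M.PosSemidef) : (c • M).PosSemidef := by
  refine .of_dotProduct_mulVec_nonneg (by rw [Matrix.IsHermitian, conjTranspose_smul, hM.1.eq, star_trivial]) fun x => ?_
  rw [smul_mulVec, dotProduct_smul]
  exact mul_nonneg hc (hM.dotProduct_mulVec_nonneg x)

lemma quad_cont (M : Matrix (Fin n) (Fin n) ℝ) :
    Continuous fun x : Fin n → ℝ => x ⬝ᵥ M *ᵥ x := by
  simp only [dotProduct, mulVec]
  exact continuous_finset_sum _ fun i _ =>
    (continuous_apply i).mul (continuous_finset_sum _ fun j _ =>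
      continuous_const.mul (continuous_apply j))

lemma quad_smul (M : Matrix (Fin n) (Fin n) ℝ) (c : ℝ) (x : Fin n → ℝ) :
    (c • x) ⬝ᵥ M *ᵥ (c • x) = c ^ 2 * (x ⬝ᵥ M *ᵥ x) := by
  rw [mulVec_smul, dotProduct_smul, smul_dotProduct]
  ring_nf

lemma exists_pos_smul_sub_posSemidef (hn : 0 < n) {A B : Matrix (Fin n) (Fin n) ℝ}
    (hA : A.PosDef) (hB : B.IsHermitian) :
    ∃ ε : ℝ, 0 < ε ∧ (A - ε • B).PosSemidef := by
  have : Nontrivial (Fin n → ℝ) := by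
    have : Nonempty (Fin n) := ⟨⟨0, hn⟩⟩
    infer_instance
  obtain ⟨u, hu, humin⟩ := (isCompact_sphere (0 : Fin n → ℝ) 1).exists_isMinOn
    (NormedSpace.sphere_nonempty.mpr zero_le_one) (quad_cont A).continuousOn
  obtain ⟨v, hv, hvmax⟩ := (isCompact_sphere (0 : Fin n → ℝ) 1).exists_isMaxOn
    (NormedSpace.sphere_nonempty.mpr zero_le_one) (quad_cont B).continuousOn
  set δ := u ⬝ᵥ A *ᵥ u with hδ
  set K := v ⬝ᵥ B *ᵥ v with hK
  have hu0 : u ≠ 0 := by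
    intro h; rw [h] at hu; simp at hu
  have hδpos : 0 < δ := by
    have := hA.dotProduct_mulVec_pos hu0
    simpa using this
  set ε := δ / max K δ with hε
  have hmaxpos : 0 < max K δ := lt_max_of_lt_right hδpos
  have hεpos : 0 < ε := div_pos hδpos hmaxpos
  refine ⟨ε, hεpos, .of_dotProduct_mulVec_nonneg (hA.1.sub (by rw [Matrix.IsHermitian, conjTranspose_smul, hB.eq, star_trivial])) fun x => ?_⟩
  · rcases eq_or_ne x 0 with rfl | hx
    · simp
    · have hxs : ‖x‖⁻¹ • x ∈ Metric.sphere (0 : Fin n → ℝ) 1 := by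
        rw [Metric.mem_sphere, dist_zero_right]
        exact norm_smul_inv_norm (𝕜 := ℝ) hx
      set w := ‖x‖⁻¹ • x with hw
      obtain ⟨r, hr⟩ : ∃ r : ℝ, r = ‖x‖ := ⟨_, rfl⟩
      have hxw : x = r • w := by
        rw [hr, hw, smul_smul, mul_inv_cancel₀ (norm_ne_zero_iff.mpr hx), one_smul]
      have h1 : δ ≤ w ⬝ᵥ A *ᵥ w := humin hxs
      have h2 : w ⬝ᵥ B *ᵥ w ≤ K := hvmax hxs
      have key : 0 ≤ w ⬝ᵥ A *ᵥ w - ε * (w ⬝ᵥ B *ᵥ w) := by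
        have hεK : ε * (w ⬝ᵥ B *ᵥ w) ≤ δ := by
          calc ε * (w ⬝ᵥ B *ᵥ w) ≤ ε * max K δ := by
                refine mul_le_mul_of_nonneg_left ?_ hεpos.le
                exact le_trans h2 (le_max_left _ _)
            _ = δ := by rw [hε]; field_simp
        linarith
      have e : x ⬝ᵥ ((A - ε • B) *ᵥ x) = r ^ 2 * (w ⬝ᵥ A *ᵥ w - ε * (w ⬝ᵥ B *ᵥ w)) := by
        rw [hxw, sub_mulVec, dotProduct_sub, smul_mulVec, dotProduct_smul,
          quad_smul A r w, quad_smul B r w, smul_eq_mul]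
        ring
      simp only [star_trivial]
      rw [e]
      exact mul_nonneg (sq_nonneg _) key

lemma psd_abs_entry {M : Matrix (Fin n) (Fin n) ℝ} (hM : M.PosSemidef) (i j : Fin n) :
    |M i j| ≤ (M i i + M j j) / 2 := by
  have hsym : M i j = M j i := by
    have := hM.1.apply i j
    simpa using this.symm
  have h1 := hM.dotProduct_mulVec_nonneg (Pi.single i 1 + Pi.single j 1)
  have h2 := hM.dotProduct_mulVec_nonneg (Pi.single i 1 - Pi.single j 1)
  simp only [star_trivial] at h1 h2
  simp only [mulVec_add, mulVec_sub, dotProduct_add, dotProduct_sub, add_dotProduct,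
    sub_dotProduct, mulVec_single, single_dotProduct, one_mul, mul_one,
    MulOpposite.op_one, one_smul, Matrix.col_apply] at h1 h2
  rw [abs_le]; constructor <;> [nlinarith [h1, hsym]; nlinarith [h2, hsym]]

end aux

section lop
variable {m n : ℕ} (ν : Fin m → ℝ) (F : Finset (Fin m) → Matrix (Fin n) (Fin n) ℝ)

lemma psd_diag_nonneg {M : Matrix (Fin n) (Fin n) ℝ} (hM : M.PosSemidef) (i : Fin n) :
    0 ≤ M i i := by
  have := hM.dotProduct_mulVec_nonneg (Pi.single i 1)
  simpa [mulVec_single, single_dotProduct] using this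

lemma Lop_psd {Y : Matrix (Fin n) (Fin n) ℝ} (hY : Y.PosSemidef) :
    (Lop ν F Y).PosSemidef := by
  unfold Lop
  refine Finset.sum_induction _ _ (fun a b ha hb => ha.add hb) .zero ?_
  intro I _
  refine psd_smul (sq_nonneg _) ?_
  have := hY.mul_mul_conjTranspose_same (F I)
  rwa [conjTranspose_eq_transpose_of_trivial] at this

lemma Lop_sub (A B : Matrix (Fin n) (Fin n) ℝ) :
    Lop ν F (A - B) = Lop ν F A - Lop ν F B := by
  unfold Lop
  rw [← Finset.sum_sub_distrib]
  congr 1; ext I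
  rw [Matrix.mul_sub, Matrix.sub_mul, smul_sub]

lemma Lop_smul (c : ℝ) (A : Matrix (Fin n) (Fin n) ℝ) :
    Lop ν F (c • A) = c • Lop ν F A := by
  unfold Lop
  rw [Finset.smul_sum]
  congr 1; ext I
  rw [Matrix.mul_smul, Matrix.smul_mul, smul_comm]

end lop

/-- Lemma L1, part a: if Ȳ ≻ 0 and 𝓛(Ȳ) ≺ Ȳ, then for every
positive semidefinite W₀, the iterates 𝓛ᵏ(W₀) converge to 0 (entrywise). -/
theorem Lop_iterate_tendsto_zero (m n : ℕ) (hm : 0 < m) (hn : 0 < n) (ν : Fin m → ℝ)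
    (hν : ∀ i, ν i ∈ Set.Icc (0 : ℝ) 1)
    (F : Finset (Fin m) → Matrix (Fin n) (Fin n) ℝ)
    (Ybar : Matrix (Fin n) (Fin n) ℝ) (hYbar : Ybar.PosDef)
    (hL : (Ybar - Lop ν F Ybar).PosDef)
    (W₀ : Matrix (Fin n) (Fin n) ℝ) (hW₀ : W₀.PosSemidef) :
    Filter.Tendsto (fun k : ℕ => (Lop ν F)^[k] W₀) Filter.atTop (nhds 0) := by
  obtain ⟨ε₀, hε₀, hPSD₀⟩ :=
    exists_pos_smul_sub_posSemidef hn hL hYbar.isHermitian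
  set ε : ℝ := min ε₀ (1/2) with hεdef
  have hεpos : 0 < ε := lt_min hε₀ (by norm_num)
  have hεle : ε ≤ ε₀ := min_le_left _ _
  have hεhalf : ε ≤ 1/2 := min_le_right _ _
  set ρ : ℝ := 1 - ε with hρdef
  have hρ0 : 0 ≤ ρ := by simp only [hρdef]; linarith
  have hρ1 : ρ < 1 := by simp only [hρdef]; linarith
  have hstep : (ρ • Ybar - Lop ν F Ybar).PosSemidef := by
    have e : ρ • Ybar - Lop ν F Ybar =
        ((Ybar - Lop ν F Ybar) - ε₀ • Ybar) + (ε₀ - ε) • Ybar := by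
      simp only [hρdef, sub_smul, one_smul]
      abel
    rw [e]
    exact hPSD₀.add (psd_smul (by linarith) hYbar.posSemidef)
  obtain ⟨ε₁, hε₁, hPSD₁⟩ :=
    exists_pos_smul_sub_posSemidef hn hYbar hW₀.isHermitian
  set c : ℝ := ε₁⁻¹ with hcdef
  have hc : 0 < c := inv_pos.mpr hε₁
  have hW0le : (c • Ybar - W₀).PosSemidef := by
    have e : c • Ybar - W₀ = c • (Ybar - ε₁ • W₀) := by
      rw [smul_sub, smul_smul, hcdef, inv_mul_cancel₀ hε₁.ne', one_smul]
    rw [e]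
    exact psd_smul hc.le hPSD₁
  have main : ∀ k : ℕ, ((c * ρ ^ k) • Ybar - (Lop ν F)^[k] W₀).PosSemidef ∧
      ((Lop ν F)^[k] W₀).PosSemidef := by
    intro k
    induction k with
    | zero => simpa using ⟨hW0le, hW₀⟩
    | succ k ih =>
      obtain ⟨ih1, ih2⟩ := ih
      have hLD := Lop_psd ν F ih1
      refine ⟨?_, by rw [Function.iterate_succ_apply']; exact Lop_psd ν F ih2⟩
      have e1 : Lop ν F ((c * ρ ^ k) • Ybar - (Lop ν F)^[k] W₀) =
          (c * ρ ^ k) • Lop ν F Ybar - (Lop ν F)^[k+1] W₀ := by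
        rw [Lop_sub, Lop_smul, Function.iterate_succ_apply']
      have h3 : ((c * ρ ^ k) • (ρ • Ybar - Lop ν F Ybar)).PosSemidef :=
        psd_smul (mul_nonneg hc.le (pow_nonneg hρ0 k)) hstep
      have e2 : (c * ρ ^ (k+1)) • Ybar - (Lop ν F)^[k+1] W₀ =
          (c * ρ ^ k) • (ρ • Ybar - Lop ν F Ybar) +
            ((c * ρ ^ k) • Lop ν F Ybar - (Lop ν F)^[k+1] W₀) := by
        rw [smul_sub, smul_smul, pow_succ]
        rw [show c * ρ ^ k * ρ = c * (ρ ^ k * ρ) by ring]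
        abel
      rw [e2]
      exact h3.add (e1 ▸ hLD)
  refine tendsto_pi_nhds.mpr fun i => tendsto_pi_nhds.mpr fun j => ?_
  have hb : ∀ k : ℕ, ‖((Lop ν F)^[k] W₀) i j‖ ≤
      (c * ((Ybar i i + Ybar j j) / 2)) * ρ ^ k := by
    intro k
    obtain ⟨h1, h2⟩ := main k
    have habs := psd_abs_entry h2 i j
    have hdi : ((Lop ν F)^[k] W₀) i i ≤ c * ρ ^ k * Ybar i i := by
      have := psd_diag_nonneg h1 i
      simp only [Matrix.sub_apply, Matrix.smul_apply, smul_eq_mul] at this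
      linarith
    have hdj : ((Lop ν F)^[k] W₀) j j ≤ c * ρ ^ k * Ybar j j := by
      have := psd_diag_nonneg h1 j
      simp only [Matrix.sub_apply, Matrix.smul_apply, smul_eq_mul] at this
      linarith
    rw [Real.norm_eq_abs]
    calc |((Lop ν F)^[k] W₀) i j| ≤ (((Lop ν F)^[k] W₀) i i + ((Lop ν F)^[k] W₀) j j) / 2 :=
          habs
      _ ≤ (c * ρ ^ k * Ybar i i + c * ρ ^ k * Ybar j j) / 2 := by linarith
      _ = (c * ((Ybar i i + Ybar j j) / 2)) * ρ ^ k := by ring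
  have hlim : Filter.Tendsto (fun k : ℕ => (c * ((Ybar i i + Ybar j j) / 2)) * ρ ^ k)
      Filter.atTop (nhds 0) := by
    simpa using (tendsto_pow_atTop_nhds_zero_of_lt_one hρ0 hρ1).const_mul
      (c * ((Ybar i i + Ybar j j) / 2))
  exact squeeze_zero_norm hb hlim
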